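/- If 0 < αI ≼ P ≼ βI for a symmetric matrix P ∈ ℝ^{d×d} and u ∈ ℝ^d with u ≠ 0, R > 0, then the Kalman gain K = P u (R + uᵀ P u)^{-1} satisfies α‖u‖/(R + β‖u‖²) ≤ ‖K‖ ≤ β‖u‖/(R + α‖u‖²); in particular K ≠ 0. -/

import Mathlib

open Matrix

/-- Euclidean norm of a vector in ℝ^d. -/
noncomputable def eucNorm {d : ℕ} (v : Fin d → ℝ) : ℝ := Real.sqrt (∑ i, v i ^ 2)

lemma mulVec_dot_eq {d : ℕ} (A : Matrix (Fin d) (Fin d) ℝ) (x y : Fin d → ℝ) :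
    (A *ᵥ x) ⬝ᵥ y = x ⬝ᵥ (Aᵀ *ᵥ y) := by
  rw [Matrix.dotProduct_mulVec, Matrix.vecMul_transpose]

open scoped MatrixOrder

/-- If `0 ⪯ P ⪯ βI` then `‖Pu‖² ≤ β ⟨u, Pu⟩`. -/
lemma sq_mulVec_le {d : ℕ} {P : Matrix (Fin d) (Fin d) ℝ} (hP : P.PosSemidef) {β : ℝ}
    (hhigh : ((β • (1 : Matrix (Fin d) (Fin d) ℝ)) - P).PosSemidef) (u : Fin d → ℝ) :
    (P *ᵥ u) ⬝ᵥ (P *ᵥ u) ≤ β * (u ⬝ᵥ (P *ᵥ u)) := by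
  classical
  set S := CFC.sqrt P with hS
  have hSS : S * S = P := CFC.sqrt_mul_sqrt_self P (Matrix.nonneg_iff_posSemidef.mpr hP)
  have hSsymm : Sᵀ = S := by
    have h2 : Sᴴ = S := (Matrix.nonneg_iff_posSemidef.mp (CFC.sqrt_nonneg P)).1
    rwa [Matrix.conjTranspose_eq_transpose_of_trivial] at h2
  have hPT : Pᵀ = P := by
    have h2 : Pᴴ = P := hP.1
    rwa [Matrix.conjTranspose_eq_transpose_of_trivial] at h2
  have hgen : ∀ x y : Fin d → ℝ, (P *ᵥ x) ⬝ᵥ y = x ⬝ᵥ (P *ᵥ y) := fun x y => by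
    rw [mulVec_dot_eq, hPT]
  have hA : (S *ᵥ u) ⬝ᵥ (S *ᵥ u) = u ⬝ᵥ (P *ᵥ u) := by
    rw [mulVec_dot_eq, hSsymm, Matrix.mulVec_mulVec, hSS]
  have hSPS : S * P * S = P * P := by rw [← hSS]; simp only [Matrix.mul_assoc]
  have hB : (S *ᵥ u) ⬝ᵥ (P *ᵥ (S *ᵥ u)) = (P *ᵥ u) ⬝ᵥ (P *ᵥ u) := by
    rw [mulVec_dot_eq, hSsymm, Matrix.mulVec_mulVec, Matrix.mulVec_mulVec,
      hSPS, ← Matrix.mulVec_mulVec, ← hgen]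
  have h := hhigh.dotProduct_mulVec_nonneg (S *ᵥ u)
  simp only [star_trivial, Matrix.sub_mulVec, Matrix.smul_mulVec, Matrix.one_mulVec,
    dotProduct_sub, dotProduct_smul, smul_eq_mul, hA] at h
  rw [hB] at h
  linarith

/-- Bounds on the norm of the Kalman gain when αI ⪯ P ⪯ βI. -/
theorem stmt_6 (d : ℕ) (P : Matrix (Fin d) (Fin d) ℝ) (hPsymm : P.IsSymm)
    (α β R : ℝ) (hα : 0 < α) (hβ : 0 < β) (hR : 0 < R)
    (hlow : (P - α • (1 : Matrix (Fin d) (Fin d) ℝ)).PosSemidef)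
    (hhigh : ((β • (1 : Matrix (Fin d) (Fin d) ℝ)) - P).PosSemidef)
    (u : Fin d → ℝ) (hu : u ≠ 0)
    (K : Fin d → ℝ) (hK : K = (R + u ⬝ᵥ P *ᵥ u)⁻¹ • (P *ᵥ u)) :
    α * eucNorm u / (R + β * (eucNorm u) ^ 2) ≤ eucNorm K ∧
    eucNorm K ≤ β * eucNorm u / (R + α * (eucNorm u) ^ 2) ∧
    K ≠ 0 := by
  classical
  set v : Fin d → ℝ := P *ᵥ u with hv
  set n2 : ℝ := ∑ i, u i ^ 2 with hn2def
  set m2 : ℝ := ∑ i, v i ^ 2 with hm2def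
  set q : ℝ := u ⬝ᵥ v with hqdef
  have hn2_nonneg : 0 ≤ n2 := Finset.sum_nonneg fun i _ => sq_nonneg _
  have hm2_nonneg : 0 ≤ m2 := Finset.sum_nonneg fun i _ => sq_nonneg _
  have huu : u ⬝ᵥ u = n2 := by simp [dotProduct, hn2def, sq]
  have hvv : v ⬝ᵥ v = m2 := by simp [dotProduct, hm2def, sq]
  have hn2_pos : 0 < n2 := by
    rcases hn2_nonneg.lt_or_eq with h | h
    · exact h
    · exact absurd (dotProduct_self_eq_zero.mp (huu.trans h.symm)) hu
  have hq_low : α * n2 ≤ q := by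
    have h := hlow.dotProduct_mulVec_nonneg u
    simp only [star_trivial, Matrix.sub_mulVec, Matrix.smul_mulVec, Matrix.one_mulVec,
      dotProduct_sub, dotProduct_smul, smul_eq_mul, huu, ← hv, ← hqdef] at h
    linarith
  have hq_high : q ≤ β * n2 := by
    have h := hhigh.dotProduct_mulVec_nonneg u
    simp only [star_trivial, Matrix.sub_mulVec, Matrix.smul_mulVec, Matrix.one_mulVec,
      dotProduct_sub, dotProduct_smul, smul_eq_mul, huu, ← hv, ← hqdef] at h
    linarith
  have hq_pos : 0 < q := lt_of_lt_of_le (by positivity) hq_low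
  have hPher : P.IsHermitian := by
    rwa [Matrix.IsHermitian, Matrix.conjTranspose_eq_transpose_of_trivial]
  have hP : P.PosSemidef := by
    refine Matrix.PosSemidef.of_dotProduct_mulVec_nonneg hPher fun x => ?_
    have h := hlow.dotProduct_mulVec_nonneg x
    have hxx : 0 ≤ x ⬝ᵥ x := by
      simp only [dotProduct]; exact Finset.sum_nonneg fun i _ => mul_self_nonneg _
    simp only [star_trivial, Matrix.sub_mulVec, Matrix.smul_mulVec, Matrix.one_mulVec,
      dotProduct_sub, dotProduct_smul, smul_eq_mul] at h ⊢
    nlinarith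
  -- m2 ≤ β * q
  have hm_high : m2 ≤ β * q := by
    have h := sq_mulVec_le hP hhigh u
    rw [← hv, hvv, ← hqdef] at h
    exact h
  -- Cauchy-Schwarz : q^2 ≤ n2 * m2
  have hCS : q ^ 2 ≤ n2 * m2 := by
    have := Finset.sum_mul_sq_le_sq_mul_sq Finset.univ u v
    simpa [hqdef, dotProduct, hn2def, hm2def] using this
  have hm_low : α ^ 2 * n2 ≤ m2 := by
    have h1 : (α * n2) ^ 2 ≤ q ^ 2 := by
      apply sq_le_sq' <;> nlinarith
    nlinarith
  have hm_high2 : m2 ≤ β ^ 2 * n2 := by nlinarith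
  -- norms
  have heu : eucNorm u = Real.sqrt n2 := rfl
  have heun_pos : 0 < eucNorm u := by rw [heu]; exact Real.sqrt_pos.mpr hn2_pos
  have heusq : eucNorm u ^ 2 = n2 := by rw [heu]; exact Real.sq_sqrt hn2_nonneg
  have hevsq : eucNorm v ^ 2 = m2 := Real.sq_sqrt hm2_nonneg
  have hev_nonneg : 0 ≤ eucNorm v := Real.sqrt_nonneg _
  have hev_low : α * eucNorm u ≤ eucNorm v := by
    have h1 : 0 ≤ α * eucNorm u := by positivity
    nlinarith [hevsq, heusq, hm_low]
  have hev_high : eucNorm v ≤ β * eucNorm u := by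
    nlinarith [hevsq, heusq, hm_high2, hev_nonneg, heun_pos, mul_pos hβ heun_pos]
  have hRq_pos : 0 < R + q := by linarith
  have hKnorm : eucNorm K = (R + q)⁻¹ * eucNorm v := by
    have hsum : ∑ i, K i ^ 2 = ((R + q)⁻¹) ^ 2 * m2 := by
      rw [hK, hm2def, Finset.mul_sum]
      refine Finset.sum_congr rfl fun i _ => ?_
      simp only [Pi.smul_apply, smul_eq_mul]
      ring
    show Real.sqrt (∑ i, K i ^ 2) = (R + q)⁻¹ * Real.sqrt (∑ i, v i ^ 2)
    rw [hsum, ← hm2def, Real.sqrt_mul (by positivity), Real.sqrt_sq (by positivity)]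
  have hRA : 0 < R + α * n2 := by positivity
  have hRB : 0 < R + β * n2 := by positivity
  have hlow_final : α * eucNorm u / (R + β * (eucNorm u) ^ 2) ≤ eucNorm K := by
    rw [hKnorm, heusq, inv_mul_eq_div]
    exact div_le_div₀ hev_nonneg hev_low hRq_pos (by linarith)
  have hhigh_final : eucNorm K ≤ β * eucNorm u / (R + α * (eucNorm u) ^ 2) := by
    rw [hKnorm, heusq, inv_mul_eq_div]
    exact div_le_div₀ (by positivity) hev_high hRA (by linarith)
  refine ⟨hlow_final, hhigh_final, ?_⟩
  intro hK0
  have hz : eucNorm K = 0 := by rw [hK0]; simp [eucNorm]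
  have hpos : 0 < eucNorm K := by
    refine lt_of_lt_of_le ?_ hlow_final
    refine div_pos (mul_pos hα heun_pos) ?_
    rw [heusq]; exact hRB
  exact absurd hz hpos.ne'
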